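/- arXiv:0904.0916 — 3 statements merged into one kernel-verified Lean document; each statement's English description precedes it below -/
import Mathlib

section
/- In a left adequate semigroup S, for every idempotent e and every a ∈ S, e a^+ = (ea)^+. -/
/-- `a 𝓡* b` in a semigroup `S`: for all `x, y ∈ S¹`, `xa = ya ↔ xb = yb`. -/
def RStar {S : Type*} [Semigroup S] (a b : S) : Prop :=
  ∀ x y : WithOne S, x * (a : WithOne S) = y * (a : WithOne S) ↔
    x * (b : WithOne S) = y * (b : WithOne S)

/-- `S` with unary operation `p` is a left adequate semigroup: idempotents commute,
each `p a` is an idempotent, and `p a` is the (unique) idempotent `𝓡*`-related to `a`. -/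
def IsLeftAdequatePlus {S : Type*} [Semigroup S] (p : S → S) : Prop :=
  (∀ e f : S, e * e = e → f * f = f → e * f = f * e) ∧
  (∀ a : S, p a * p a = p a) ∧
  (∀ a : S, RStar a (p a))

lemma rstar_idem_eq {S : Type*} [Semigroup S] {e f : S}
    (hcomm : e * f = f * e) (he : e * e = e) (hf : f * f = f) (hr : RStar e f) :
    e = f := by
  have h1 : (e : WithOne S) * f = f := by
    have := (hr (e : S) 1).mp (by
      rw [← WithOne.coe_mul, he, one_mul])
    rwa [one_mul] at this
  have h2 : (f : WithOne S) * e = e := by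
    have := (hr (f : S) 1).mpr (by
      rw [← WithOne.coe_mul, hf, one_mul])
    rwa [one_mul] at this
  have : (e : WithOne S) = f := by
    rw [← h2, ← WithOne.coe_mul, ← hcomm, WithOne.coe_mul, h1]
  exact WithOne.coe_inj.mp this

/-- In a left adequate semigroup, for every idempotent `e` and every `a`,
`e a⁺ = (ea)⁺`. -/
theorem idem_mul_plus {S : Type*} [Semigroup S] (p : S → S)
    (h : IsLeftAdequatePlus p) (e a : S) (he : e * e = e) : e * p a = p (e * a) := by
  obtain ⟨hc, hi, hr⟩ := h
  -- e * p a is idempotent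
  have hf : (e * p a) * (e * p a) = e * p a := by
    have hcm := hc e (p a) he (hi a)
    calc (e * p a) * (e * p a) = e * (p a * e) * p a := by
          simp only [mul_assoc]
      _ = e * (e * p a) * p a := by rw [← hcm]
      _ = (e * e) * (p a * p a) := by simp only [mul_assoc]
      _ = e * p a := by rw [he, hi a]
  -- e * p a 𝓡* e * a
  have hr1 : RStar (e * p a) (e * a) := by
    intro x y
    rw [WithOne.coe_mul, WithOne.coe_mul, ← mul_assoc, ← mul_assoc,
      ← mul_assoc, ← mul_assoc]
    exact (hr a (x * e) (y * e)).symm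
  -- compose with e*a 𝓡* p (e*a)
  have hr2 : RStar (e * p a) (p (e * a)) := fun x y =>
    (hr1 x y).trans (hr (e * a) x y)
  exact rstar_idem_eq (hc _ _ hf (hi (e * a))) hf (hi (e * a)) hr2
end

section
/- In a left adequate semigroup S, if e and f are idempotents with ef = f, then for every a ∈ S, (ae)^+ (af)^+ = (af)^+. -/
/-- In a left adequate semigroup, if `e`, `f` are idempotents with `ef = f`, then
`(ae)⁺ (af)⁺ = (af)⁺` for every `a`. -/
theorem plus_absorb_of_idem {S : Type*} [Semigroup S] (p : S → S)
    (h : IsLeftAdequatePlus p) (e f a : S) (he : e * e = e) (hf : f * f = f)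
    (hef : e * f = f) : p (a * e) * p (a * f) = p (a * f) := by
  obtain ⟨hcomm, hidem, hR⟩ := h
  -- p(ae) * (ae) = ae
  have h1 : p (a * e) * (a * e) = a * e := by
    have := ((hR (a * e)) (↑(p (a * e))) 1).mpr
    have key : (↑(p (a * e)) : WithOne S) * ↑(a * e) = 1 * ↑(a * e) := by
      apply this
      rw [one_mul, ← WithOne.coe_mul, hidem]
    rw [one_mul, ← WithOne.coe_mul] at key
    exact WithOne.coe_inj.mp key
  -- p(ae) * (af) = af
  have h2 : p (a * e) * (a * f) = a * f := by
    calc p (a * e) * (a * f) = p (a * e) * (a * e * f) := by rw [mul_assoc a e f, hef]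
    _ = p (a * e) * (a * e) * f := by rw [mul_assoc (p (a * e))]
    _ = a * e * f := by rw [h1]
    _ = a * f := by rw [mul_assoc, hef]
  -- transfer via RStar (af)
  have key : (↑(p (a * e)) : WithOne S) * ↑(p (a * f)) = 1 * ↑(p (a * f)) := by
    apply ((hR (a * f)) (↑(p (a * e))) 1).mp
    rw [one_mul, ← WithOne.coe_mul, h2]
  rw [one_mul, ← WithOne.coe_mul] at key
  exact WithOne.coe_inj.mp key
end

section
/- For a non-empty set Σ, the free left adequate semigroup on Σ is not finitely generated as a plain semigroup (without the unary operation). -/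
/-- `(S, p)` together with `ι : σ → S` is a free left adequate semigroup on `σ`:
every map from `σ` to a left adequate semigroup extends uniquely to a
`(2,1)`-morphism (preserving multiplication and the `⁺` operation). -/
def FreeLeftAdequateSemigroupOn (σ : Type*) (S : Type*) [Semigroup S]
    (p : S → S) (ι : σ → S) : Prop :=
  IsLeftAdequatePlus p ∧
  ∀ (T : Type*) [Semigroup T] (q : T → T), IsLeftAdequatePlus q →
    ∀ χ : σ → T, ∃! f : S → T,
      (∀ a b : S, f (a * b) = f a * f b) ∧ (∀ a : S, f (p a) = q (f a)) ∧
      (∀ s : σ, f (ι s) = χ s)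

/-- Witness semigroup: pairs `(m,n)` with `n ≤ m`, multiplication
`(m,n)*(k,l) = (max m (n+k), n+l)`. (Universe polymorphic via `ULift`.) -/
def TT : Type u := {x : ULift.{u} ℕ × ULift.{u} ℕ // x.2.down ≤ x.1.down}

/-- shorthand constructor -/
def TT.mk (m n : ℕ) (h : n ≤ m) : TT.{u} := ⟨(ULift.up m, ULift.up n), h⟩

instance : Semigroup TT.{u} where
  mul a b := TT.mk (a.1.1.down + (a.1.2.down + b.1.1.down - a.1.1.down)) (a.1.2.down + b.1.2.down)
    (by have := a.2; have := b.2; omega)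
  mul_assoc a b c := by
    apply Subtype.ext
    apply Prod.ext <;> apply ULift.ext <;>
      simp only [HMul.hMul, Mul.mul, TT.mk] <;> omega

theorem TT.mul_fst (a b : TT.{u}) :
    (a * b).1.1.down = a.1.1.down + (a.1.2.down + b.1.1.down - a.1.1.down) := rfl
theorem TT.mul_snd (a b : TT.{u}) : (a * b).1.2.down = a.1.2.down + b.1.2.down := rfl

theorem TT.mk_fst (m n : ℕ) (h : n ≤ m) : (TT.mk.{u} m n h).1.1.down = m := rfl
theorem TT.mk_snd (m n : ℕ) (h : n ≤ m) : (TT.mk.{u} m n h).1.2.down = n := rfl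

theorem TT.eq_iff {a b : TT.{u}} :
    a = b ↔ (a.1.1.down = b.1.1.down ∧ a.1.2.down = b.1.2.down) := by
  constructor
  · rintro rfl; exact ⟨rfl, rfl⟩
  · rintro ⟨h1, h2⟩
    exact Subtype.ext (Prod.ext (ULift.ext _ _ h1) (ULift.ext _ _ h2))

/-- the unary operation on `TT` -/
def qq : TT.{u} → TT.{u} := fun a => TT.mk a.1.1.down 0 (Nat.zero_le _)

theorem qq_fst (a : TT.{u}) : (qq a).1.1.down = a.1.1.down := rfl
theorem qq_snd (a : TT.{u}) : (qq a).1.2.down = 0 := rfl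

theorem TT.adequate : IsLeftAdequatePlus qq.{u} := by
  refine ⟨?_, ?_, ?_⟩
  · intro e f he hf
    have he2 : e.1.2.down = 0 := by
      have := congrArg (fun t : TT.{u} => t.1.2.down) he
      simp only [TT.mul_snd] at this; omega
    have hf2 : f.1.2.down = 0 := by
      have := congrArg (fun t : TT.{u} => t.1.2.down) hf
      simp only [TT.mul_snd] at this; omega
    rw [TT.eq_iff]
    simp only [TT.mul_fst, TT.mul_snd]
    omega
  · intro a
    rw [TT.eq_iff]
    simp only [TT.mul_fst, TT.mul_snd, qq_fst, qq_snd]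
    exact ⟨by omega, trivial⟩
  · intro a x y
    induction x using WithOne.cases_on
    · induction y using WithOne.cases_on
      · simp
      · intro u
        rw [one_mul, one_mul, ← WithOne.coe_mul, ← WithOne.coe_mul,
          WithOne.coe_inj, WithOne.coe_inj, TT.eq_iff, TT.eq_iff]
        simp only [TT.mul_fst, TT.mul_snd, qq_fst, qq_snd]
        have := a.2; have := u.2; omega
    · intro r
      induction y using WithOne.cases_on
      · rw [one_mul, one_mul, ← WithOne.coe_mul, ← WithOne.coe_mul,
          WithOne.coe_inj, WithOne.coe_inj, TT.eq_iff, TT.eq_iff]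
        simp only [TT.mul_fst, TT.mul_snd, qq_fst, qq_snd]
        have := a.2; have := r.2; omega
      · intro u
        rw [← WithOne.coe_mul, ← WithOne.coe_mul, ← WithOne.coe_mul, ← WithOne.coe_mul,
          WithOne.coe_inj, WithOne.coe_inj, TT.eq_iff, TT.eq_iff]
        simp only [TT.mul_fst, TT.mul_snd, qq_fst, qq_snd]
        have := a.2; have := r.2; have := u.2; omega

/-- In `TT`, any element of the closure of a set `G` with second coordinate `0`
has first coordinate bounded by a bound on first coordinates of `G`. -/
theorem TT.closure_bound {G : Set TT.{u}} {B : ℕ}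
    (hG : ∀ g ∈ G, g.1.1.down ≤ B) {t : TT.{u}}
    (ht : t ∈ Subsemigroup.closure G) (ht2 : t.1.2.down = 0) : t.1.1.down ≤ B := by
  induction ht using Subsemigroup.closure_induction with
  | mem g hg => exact hG g hg
  | mul x y hx hy ihx ihy =>
    rw [TT.mul_snd] at ht2
    rw [TT.mul_fst]
    have h1 := ihx (by omega)
    have h2 := ihy (by omega)
    omega

/-- For a non-empty set `σ`, the free left adequate semigroup on `σ` is not
finitely generated as a plain semigroup (forgetting the unary operation). -/
theorem free_left_adequate_not_finitely_generated (σ : Type*) [Nonempty σ]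
    (S : Type*) [Semigroup S] (p : S → S) (ι : σ → S)
    (hfree : FreeLeftAdequateSemigroupOn σ S p ι) :
    ¬ ∃ F : Set S, F.Finite ∧ Subsemigroup.closure F = ⊤ := by
  rintro ⟨F, hFfin, hFtop⟩
  -- get the induced morphism f : S → TT sending generators to (1,1)
  obtain ⟨f, ⟨hmul, hp, hι⟩, -⟩ :=
    hfree.2 TT qq TT.adequate (fun _ => TT.mk 1 1 le_rfl)
  set a : S := ι (Classical.arbitrary σ) with ha
  have hfa : f a = TT.mk 1 1 le_rfl := hι _
  -- c M has image (M+1, M+1)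
  let c : ℕ → S := fun M => Nat.rec a (fun _ b => b * a) M
  have hc : ∀ M : ℕ, f (c M) = TT.mk (M + 1) (M + 1) le_rfl := by
    intro M
    induction M with
    | zero => exact hfa
    | succ M ih =>
      show f (c M * a) = _
      rw [hmul, ih, hfa, TT.eq_iff]
      simp only [TT.mul_fst, TT.mul_snd, TT.mk_fst, TT.mk_snd]
      exact ⟨by rw [Nat.add_sub_cancel_left], trivial⟩
  -- the images of f are in the closure of f '' F
  let f' : S →ₙ* TT := ⟨f, fun x y => hmul x y⟩
  have hmem : ∀ s : S, f s ∈ Subsemigroup.closure (f '' F) := by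
    intro s
    have h1 : s ∈ Subsemigroup.closure F := hFtop ▸ Subsemigroup.mem_top s
    have h2 := Subsemigroup.mem_map_of_mem f' h1
    rw [MulHom.map_mclosure] at h2
    exact h2
  -- bound on first coordinates of f '' F
  have hfin : ((fun t : TT => t.1.1.down) '' (f '' F)).Finite := (hFfin.image f).image _
  obtain ⟨B, hB⟩ := hfin.bddAbove
  have hbound : ∀ g ∈ f '' F, g.1.1.down ≤ B := fun g hg => hB ⟨g, hg, rfl⟩
  -- contradiction: f (p (c B)) = (B+1, 0)
  have h1 : f (p (c B)) = TT.mk (B + 1) 0 (Nat.zero_le _) := by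
    rw [hp, hc]; rfl
  have h2 := TT.closure_bound hbound (hmem (p (c B))) (by rw [h1]; rfl)
  rw [h1, TT.mk_fst] at h2
  omega
end
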